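/- The market-clearing price is non-increasing in the supply: for a fixed finite advertiser set I, if S_1 > S_2 > 0 and p_1, p_2 > 0 are market-clearing prices for (I, S_1) and (I, S_2) respectively, then p_1 ≤ p_2. -/
import Mathlib


/-- `p` is a market-clearing (optimal) price for advertiser set `I` with values `v`,
budgets `B` and supply `S`. -/
def IsClearingPrice {ι : Type*} (I : Finset ι) (v B : ι → ℝ) (S p : ℝ) : Prop :=
  0 < p ∧ ∃ α : ι → ℝ, (∀ i ∈ I, 0 ≤ α i ∧ α i ≤ 1) ∧
    (∀ i ∈ I, p < v i → α i = 1) ∧ (∀ i ∈ I, v i < p → α i = 0) ∧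
    S = ∑ i ∈ I, α i * B i / p

/-- The market-clearing price is non-increasing over the supply, given a fixed
advertiser set `I`. -/
theorem stmt_8 {ι : Type*} (I : Finset ι) (v B : ι → ℝ)
    (hv : ∀ i ∈ I, 0 < v i) (hB : ∀ i ∈ I, 0 < B i)
    (S₁ S₂ : ℝ) (hS₂ : 0 < S₂) (hS : S₂ < S₁)
    (p₁ p₂ : ℝ) (hp₁ : IsClearingPrice I v B S₁ p₁) (hp₂ : IsClearingPrice I v B S₂ p₂) :
    p₁ ≤ p₂ := by
  by_contra h
  push_neg at h
  obtain ⟨hp₁pos, α₁, hα₁bd, hα₁hi, hα₁lo, hS₁eq⟩ := hp₁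
  obtain ⟨hp₂pos, α₂, hα₂bd, hα₂hi, hα₂lo, hS₂eq⟩ := hp₂
  have key : S₁ ≤ S₂ := by
    rw [hS₁eq, hS₂eq]
    apply Finset.sum_le_sum
    intro i hi
    have hBi := hB i hi
    rcases lt_or_ge p₂ (v i) with hvi | hvi
    · have h2 : α₂ i = 1 := hα₂hi i hi hvi
      rw [h2, one_mul]
      have h1le : α₁ i * B i ≤ B i := by
        nlinarith [(hα₁bd i hi).1, (hα₁bd i hi).2]
      calc α₁ i * B i / p₁ ≤ B i / p₁ := by
            gcongr
          _ ≤ B i / p₂ := by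
            gcongr
    · have h1 : α₁ i = 0 := hα₁lo i hi (lt_of_le_of_lt hvi h)
      rw [h1, zero_mul, zero_div]
      have := (hα₂bd i hi).1
      positivity
  linarith
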